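/- If T' is a proper connected subhypergraph (subhypertree) of a k-uniform hypertree T, then the largest real root of φ_{T'} is strictly less than the largest real root of φ_T. -/
import Mathlib


/-- A set of edges is a matching if its edges are pairwise disjoint. -/
def IsHyperMatching {γ : Type*} (M : Finset (Finset γ)) : Prop :=
  ∀ e ∈ M, ∀ f ∈ M, e ≠ f → Disjoint e f

open Classical in
/-- `mCount E t` is the number of `t`-matchings of the hypergraph with edge set `E`. -/
noncomputable def mCount {γ : Type*} (E : Finset (Finset γ)) (t : ℕ) : ℕ :=
  (E.powerset.filter (fun M => M.card = t ∧ IsHyperMatching M)).card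

/-- The matching polynomial `φ_H(λ) = ∑_t (-1)^t m_t(H) λ^(n - t k)` evaluated at `x`. -/
noncomputable def mPolyEval {γ : Type*} (n k : ℕ) (E : Finset (Finset γ)) (x : ℝ) : ℝ :=
  ∑ t ∈ Finset.range (E.card + 1), (-1 : ℝ) ^ t * (mCount E t : ℝ) * x ^ (n - t * k)

/-- A `k`-uniform hypertree on vertex set `V` with edge set `E`. -/
inductive IsHypertree {α : Type*} [DecidableEq α] (k : ℕ) : Finset α → Finset (Finset α) → Prop
  | single (v : α) : IsHypertree k {v} ∅
  | attach {V : Finset α} {E : Finset (Finset α)} (e : Finset α) :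
      IsHypertree k V E → e.card = k → (e ∩ V).card = 1 →
      IsHypertree k (V ∪ e) (insert e E)

namespace HTaux

set_option linter.unusedSectionVars false
set_option linter.unusedVariables false
set_option maxHeartbeats 1600000


open Finset

variable {α : Type*} [DecidableEq α]

lemma edge_sub {k : ℕ} {V : Finset α} {E : Finset (Finset α)} (hT : IsHypertree k V E) :
    ∀ f ∈ E, f ⊆ V := by
  induction hT with
  | single v => simp
  | attach e hT hek hcap ih =>
    intro f hf
    rcases Finset.mem_insert.mp hf with h | h
    · subst h; exact Finset.subset_union_right
    · exact (ih f h).trans Finset.subset_union_left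

lemma edge_card {k : ℕ} {V : Finset α} {E : Finset (Finset α)} (hT : IsHypertree k V E) :
    ∀ f ∈ E, f.card = k := by
  induction hT with
  | single v => simp
  | attach e hT hek hcap ih =>
    intro f hf
    rcases Finset.mem_insert.mp hf with h | h
    · subst h; exact hek
    · exact ih f h

lemma v_nonempty {k : ℕ} {V : Finset α} {E : Finset (Finset α)} (hT : IsHypertree k V E) :
    V.Nonempty := by
  induction hT with
  | single v => exact ⟨v, Finset.mem_singleton_self v⟩
  | attach e hT hek hcap ih => exact ih.mono Finset.subset_union_left

lemma singleton_of_no_edges {k : ℕ} {V : Finset α} {E : Finset (Finset α)}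
    (hT : IsHypertree k V E) (hE : E = ∅) : ∃ w, V = {w} := by
  cases hT with
  | single v => exact ⟨v, rfl⟩
  | attach e hT hek hcap => simp at hE

lemma cover {k : ℕ} {V : Finset α} {E : Finset (Finset α)} (hT : IsHypertree k V E) :
    E.Nonempty → ∀ w ∈ V, ∃ g ∈ E, w ∈ g := by
  induction hT with
  | single v => rintro ⟨g, hg⟩; simp at hg
  | @attach V₁ E₁ e hT hek hcap ih =>
    intro _ w hw
    rcases Finset.mem_union.mp hw with hw | hw
    · by_cases hE : E₁.Nonempty
      · obtain ⟨g, hg, hwg⟩ := ih hE w hw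
        exact ⟨g, Finset.mem_insert_of_mem hg, hwg⟩
      · obtain ⟨w', hV₁⟩ := singleton_of_no_edges hT (Finset.not_nonempty_iff_eq_empty.mp hE)
        obtain ⟨u, hu⟩ := Finset.card_eq_one.mp hcap
        have hue : u ∈ e ∩ V₁ := hu ▸ Finset.mem_singleton_self u
        have huV : u ∈ V₁ := (Finset.mem_inter.mp hue).2
        have : w = u := by
          rw [hV₁] at hw huV
          simp only [Finset.mem_singleton] at hw huV
          rw [hw, huV]
        exact ⟨e, Finset.mem_insert_self _ _, this ▸ (Finset.mem_inter.mp hue).1⟩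
    · exact ⟨e, Finset.mem_insert_self _ _, hw⟩

lemma card_V {k : ℕ} {V : Finset α} {E : Finset (Finset α)} (hT : IsHypertree k V E) :
    V.card = 1 + E.card * (k - 1) := by
  induction hT with
  | single v => simp
  | @attach V₁ E₁ e hT hek hcap ih =>
    by_cases he : e ∈ E₁
    · have hsub : e ⊆ V₁ := edge_sub hT e he
      have h1 : e ∩ V₁ = e := Finset.inter_eq_left.mpr hsub
      have hV : V₁ ∪ e = V₁ := Finset.union_eq_left.mpr hsub
      have hE : insert e E₁ = E₁ := Finset.insert_eq_self.mpr he
      rw [hV, hE, ih]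
    · have hk1 : 1 ≤ k := by
        have h2 := Finset.card_le_card (Finset.inter_subset_left : e ∩ V₁ ⊆ e)
        omega
      have hcu := Finset.card_union_add_card_inter V₁ e
      rw [Finset.inter_comm] at hcu
      rw [Finset.card_insert_of_notMem he, add_mul, one_mul]
      omega

/-- Hyperforests whose components' vertex/edge sets lie inside `V₀`/`E₀`. -/
inductive IsForestOf (k : ℕ) (V₀ : Finset α) (E₀ : Finset (Finset α)) :
    Finset α → Finset (Finset α) → Prop
  | nil : IsForestOf k V₀ E₀ ∅ ∅
  | cons {V : Finset α} {E : Finset (Finset α)} {W : Finset α} {F : Finset (Finset α)} :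
      IsForestOf k V₀ E₀ V E → IsHypertree k W F → Disjoint V W →
      W ⊆ V₀ → F ⊆ E₀ → IsForestOf k V₀ E₀ (V ∪ W) (E ∪ F)

lemma forest_edge_sub {k : ℕ} {V₀ V : Finset α} {E₀ E : Finset (Finset α)}
    (hF : IsForestOf k V₀ E₀ V E) : ∀ g ∈ E, g ⊆ V := by
  induction hF with
  | nil => simp
  | cons hFrec hTW hdisj hWV₀ hFE₀ ih =>
    intro g hg
    rcases Finset.mem_union.mp hg with h | h
    · exact (ih g h).trans Finset.subset_union_left
    · exact (edge_sub hTW g h).trans Finset.subset_union_right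

lemma forest_edge_card {k : ℕ} {V₀ V : Finset α} {E₀ E : Finset (Finset α)}
    (hF : IsForestOf k V₀ E₀ V E) : ∀ g ∈ E, g.card = k := by
  induction hF with
  | nil => simp
  | cons hFrec hTW hdisj hWV₀ hFE₀ ih =>
    intro g hg
    rcases Finset.mem_union.mp hg with h | h
    · exact ih g h
    · exact edge_card hTW g h

lemma forest_mono {k : ℕ} {V₀ V₀' V : Finset α} {E₀ E₀' E : Finset (Finset α)}
    (hF : IsForestOf k V₀ E₀ V E) (hV : V₀ ⊆ V₀') (hE : E₀ ⊆ E₀') :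
    IsForestOf k V₀' E₀' V E := by
  induction hF with
  | nil => exact IsForestOf.nil
  | cons hFrec hTW hdisj hWV₀ hFE₀ ih =>
    exact IsForestOf.cons ih hTW hdisj (hWV₀.trans hV) (hFE₀.trans hE)

lemma forest_single_tree {k : ℕ} {V₀ W : Finset α} {E₀ F : Finset (Finset α)}
    (hT : IsHypertree k W F) (hW : W ⊆ V₀) (hJ : F ⊆ E₀) : IsForestOf k V₀ E₀ W F := by
  have := IsForestOf.cons (IsForestOf.nil (k := k) (V₀ := V₀) (E₀ := E₀)) hT
    (Finset.disjoint_empty_left W) hW hJ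
  simpa using this

lemma forest_isos {k : ℕ} {V₀ V : Finset α} {E₀ E : Finset (Finset α)}
    (hF : IsForestOf k V₀ E₀ V E) (S : Finset α) (hdisj : Disjoint V S) (hS : S ⊆ V₀) :
    IsForestOf k V₀ E₀ (V ∪ S) E := by
  classical
  induction S using Finset.induction_on with
  | empty => simpa using hF
  | @insert a S' ha ih =>
    have h1 : V ∪ insert a S' = (V ∪ S') ∪ {a} := by
      ext b
      simp only [Finset.mem_union, Finset.mem_insert, Finset.mem_singleton]
      tauto
    have h2 : E = E ∪ (∅ : Finset (Finset α)) := by simp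
    rw [h1, h2]
    have hd' : Disjoint V S' := hdisj.mono_right (Finset.subset_insert a S')
    have hS' : S' ⊆ V₀ := (Finset.subset_insert a S').trans hS
    refine IsForestOf.cons (ih hd' hS') (IsHypertree.single a) ?_ ?_ (Finset.empty_subset _)
    · rw [Finset.disjoint_singleton_right]
      intro hcon
      rcases Finset.mem_union.mp hcon with h | h
      · exact (Finset.disjoint_left.mp hdisj h) (Finset.mem_insert_self a S')
      · exact ha h
    · intro b hb
      rw [Finset.mem_singleton] at hb
      exact hS (hb ▸ Finset.mem_insert_self a S')

lemma forest_attach {k : ℕ} {V₀ V : Finset α} {E₀ E : Finset (Finset α)} {f : Finset α} {v : α}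
    (hF : IsForestOf k V₀ E₀ V E) (hv : v ∈ V) (hfV : f ∩ V = {v}) (hfk : f.card = k) :
    IsForestOf k (V₀ ∪ f) (insert f E₀) (V ∪ f) (insert f E) := by
  induction hF with
  | nil => simp at hv
  | @cons V' E' W F hFrec hTW hdisj hWV₀ hFE₀ ih =>
    have hvf : v ∈ f := by
      have : v ∈ f ∩ (V' ∪ W) := hfV ▸ Finset.mem_singleton_self v
      exact (Finset.mem_inter.mp this).1
    rcases Finset.mem_union.mp hv with hvV' | hvW
    · -- attach into earlier components
      have hfV' : f ∩ V' = {v} := by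
        apply Finset.Subset.antisymm
        · intro a ha
          have := Finset.mem_inter.mp ha
          have : a ∈ f ∩ (V' ∪ W) :=
            Finset.mem_inter.mpr ⟨this.1, Finset.mem_union_left _ this.2⟩
          exact hfV ▸ this
        · intro a ha
          rw [Finset.mem_singleton] at ha
          exact ha ▸ Finset.mem_inter.mpr ⟨hvf, hvV'⟩
      have ih' := ih hvV' hfV'
      have hVsh : (V' ∪ f) ∪ W = (V' ∪ W) ∪ f := Finset.union_right_comm _ _ _
      have hEsh : insert f E' ∪ F = insert f (E' ∪ F) := Finset.insert_union _ _ _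
      have hdisj' : Disjoint (V' ∪ f) W := by
        rw [Finset.disjoint_union_left]
        refine ⟨hdisj, ?_⟩
        rw [Finset.disjoint_left]
        intro a haf haW
        have : a ∈ f ∩ (V' ∪ W) :=
          Finset.mem_inter.mpr ⟨haf, Finset.mem_union_right _ haW⟩
        rw [hfV, Finset.mem_singleton] at this
        subst this
        exact (Finset.disjoint_left.mp hdisj hvV') haW
      rw [← hVsh, ← hEsh]
      exact IsForestOf.cons ih' hTW hdisj'
        (hWV₀.trans Finset.subset_union_left)
        (hFE₀.trans (Finset.subset_insert _ _))
    · -- attach into the last component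
      have hfW : f ∩ W = {v} := by
        apply Finset.Subset.antisymm
        · intro a ha
          have h := Finset.mem_inter.mp ha
          have : a ∈ f ∩ (V' ∪ W) :=
            Finset.mem_inter.mpr ⟨h.1, Finset.mem_union_right _ h.2⟩
          exact hfV ▸ this
        · intro a ha
          rw [Finset.mem_singleton] at ha
          exact ha ▸ Finset.mem_inter.mpr ⟨hvf, hvW⟩
      have hT' : IsHypertree k (W ∪ f) (insert f F) :=
        IsHypertree.attach f hTW hfk (by rw [hfW, Finset.card_singleton])
      have hdisj' : Disjoint V' (W ∪ f) := by
        rw [Finset.disjoint_union_right]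
        refine ⟨hdisj, ?_⟩
        rw [Finset.disjoint_right]
        intro a haf haV'
        have : a ∈ f ∩ (V' ∪ W) :=
          Finset.mem_inter.mpr ⟨haf, Finset.mem_union_left _ haV'⟩
        rw [hfV, Finset.mem_singleton] at this
        subst this
        exact (Finset.disjoint_right.mp hdisj hvW) haV'
      have hVsh : V' ∪ (W ∪ f) = (V' ∪ W) ∪ f := (Finset.union_assoc _ _ _).symm
      have hEsh : E' ∪ insert f F = insert f (E' ∪ F) := Finset.union_insert _ _ _
      rw [← hVsh, ← hEsh]
      exact IsForestOf.cons (forest_mono hFrec Finset.subset_union_left (Finset.subset_insert _ _)) hT' hdisj'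
        (Finset.union_subset (hWV₀.trans Finset.subset_union_left)
          (Finset.subset_union_right))
        (Finset.insert_subset_insert _ hFE₀)

lemma decomp {k : ℕ} {V : Finset α} {E : Finset (Finset α)} (hT : IsHypertree k V E)
    {v : α} (hv : v ∈ V) :
    IsForestOf k (V.erase v) (E.filter (fun g => v ∉ g))
      (V.erase v) (E.filter (fun g => v ∉ g)) := by
  classical
  induction hT with
  | single w =>
    have hvw : v = w := Finset.mem_singleton.mp hv
    subst hvw
    rw [Finset.erase_singleton]
    simp only [Finset.filter_empty]
    exact IsForestOf.nil
  | @attach V₁ E₁ f hT₁ hfk hfcap ih =>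
    obtain ⟨u, hu⟩ := Finset.card_eq_one.mp hfcap
    have huf : u ∈ f := (Finset.mem_inter.mp (hu ▸ Finset.mem_singleton_self u)).1
    have huV₁ : u ∈ V₁ := (Finset.mem_inter.mp (hu ▸ Finset.mem_singleton_self u)).2
    by_cases hfE : f ∈ E₁
    · have hsub : f ⊆ V₁ := edge_sub hT₁ f hfE
      rw [Finset.union_eq_left.mpr hsub, Finset.insert_eq_self.mpr hfE]
      rw [Finset.union_eq_left.mpr hsub] at hv
      exact ih hv
    · by_cases hvV₁ : v ∈ V₁
      · by_cases hvf : v ∈ f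
        · -- v = u : drop f, add isolated vertices f \ V₁
          have hvu : v = u := by
            have : v ∈ f ∩ V₁ := Finset.mem_inter.mpr ⟨hvf, hvV₁⟩
            rw [hu, Finset.mem_singleton] at this
            exact this
          have hB : (insert f E₁).filter (fun g => v ∉ g) = E₁.filter (fun g => v ∉ g) := by
            rw [Finset.filter_insert, if_neg (by simp [hvf])]
          have hA : (V₁ ∪ f).erase v = (V₁.erase v) ∪ (f \ V₁) := by
            ext a
            simp only [Finset.mem_erase, Finset.mem_union, Finset.mem_sdiff]
            constructor
            · rintro ⟨hne, h | h⟩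
              · exact Or.inl ⟨hne, h⟩
              · by_cases haV : a ∈ V₁
                · exact Or.inl ⟨hne, haV⟩
                · exact Or.inr ⟨h, haV⟩
            · rintro (⟨hne, h⟩ | ⟨h1, h2⟩)
              · exact ⟨hne, Or.inl h⟩
              · refine ⟨fun hav => h2 (hav ▸ hvV₁), Or.inr h1⟩
          rw [hA, hB]
          apply forest_isos
          · exact forest_mono (ih hvV₁) Finset.subset_union_left subset_rfl
          · rw [Finset.disjoint_right]
            intro a ha
            exact fun hcon => (Finset.mem_sdiff.mp ha).2 (Finset.mem_of_mem_erase hcon)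
          · intro a ha
            obtain ⟨haf, haV⟩ := Finset.mem_sdiff.mp ha
            exact Finset.mem_union_right _ (Finset.mem_sdiff.mpr ⟨haf, haV⟩)
        · -- v ∈ V₁, v ∉ f : attach f to the forest
          have hune : u ≠ v := fun h => hvf (h ▸ huf)
          have hfe : f ∩ (V₁.erase v) = {u} := by
            ext a
            simp only [Finset.mem_inter, Finset.mem_erase, Finset.mem_singleton]
            constructor
            · rintro ⟨haf, hne, haV⟩
              have : a ∈ f ∩ V₁ := Finset.mem_inter.mpr ⟨haf, haV⟩
              rw [hu, Finset.mem_singleton] at this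
              exact this
            · rintro rfl
              exact ⟨huf, hune, huV₁⟩
          have ih' := forest_attach (ih hvV₁)
            (Finset.mem_erase.mpr ⟨hune, huV₁⟩) hfe hfk
          have hA : (V₁ ∪ f).erase v = (V₁.erase v) ∪ f := by
            ext a
            simp only [Finset.mem_erase, Finset.mem_union]
            constructor
            · rintro ⟨hne, h | h⟩
              · exact Or.inl ⟨hne, h⟩
              · exact Or.inr h
            · rintro (⟨hne, h⟩ | h)
              · exact ⟨hne, Or.inl h⟩
              · exact ⟨fun hav => hvf (hav ▸ h), Or.inr h⟩
          have hB : (insert f E₁).filter (fun g => v ∉ g)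
              = insert f (E₁.filter (fun g => v ∉ g)) := by
            rw [Finset.filter_insert, if_pos hvf]
          rw [hA, hB]
          exact ih'
      · -- v ∉ V₁, so v ∈ f \ V₁
        have hvf : v ∈ f := by
          rcases Finset.mem_union.mp hv with h | h
          · exact absurd h hvV₁
          · exact h
        have hB : (insert f E₁).filter (fun g => v ∉ g) = E₁ := by
          rw [Finset.filter_insert, if_neg (by simp [hvf])]
          apply Finset.filter_true_of_mem
          intro g hg
          exact fun hcon => hvV₁ (edge_sub hT₁ g hg hcon)
        have hA : (V₁ ∪ f).erase v = V₁ ∪ ((f \ V₁).erase v) := by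
          ext a
          simp only [Finset.mem_erase, Finset.mem_union, Finset.mem_sdiff]
          constructor
          · rintro ⟨hne, h | h⟩
            · exact Or.inl h
            · by_cases haV : a ∈ V₁
              · exact Or.inl haV
              · exact Or.inr ⟨hne, h, haV⟩
          · rintro (h | ⟨hne, h1, h2⟩)
            · exact ⟨fun hav => hvV₁ (hav ▸ h), Or.inl h⟩
            · exact ⟨hne, Or.inr h1⟩
        rw [hA, hB]
        apply forest_isos
        · apply forest_single_tree hT₁
          · intro a ha
            exact Finset.mem_union_left _ ha
          · exact subset_rfl
        · rw [Finset.disjoint_right]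
          intro a ha
          exact fun hcon => (Finset.mem_sdiff.mp (Finset.mem_of_mem_erase ha)).2 hcon
        · intro a ha
          exact Finset.mem_union_right _ ha

lemma peel {k : ℕ} {V : Finset α} {E : Finset (Finset α)} (hT : IsHypertree k V E) :
    ∀ {f : Finset α} {v : α}, f ∈ E → v ∈ f → (∀ g ∈ E, g ≠ f → g ∩ f ⊆ {v}) →
    IsHypertree k (V \ (f \ {v})) (E.erase f) := by
  classical
  induction hT with
  | single w => intro f v hf _ _; simp at hf
  | @attach V₁ E₁ f₀ hT₁ hk0 hcap0 ih =>
    intro f v hf hvf hp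
    obtain ⟨u, hu⟩ := Finset.card_eq_one.mp hcap0
    have huf₀ : u ∈ f₀ := (Finset.mem_inter.mp (hu ▸ Finset.mem_singleton_self u)).1
    have huV₁ : u ∈ V₁ := (Finset.mem_inter.mp (hu ▸ Finset.mem_singleton_self u)).2
    by_cases hf₀E : f₀ ∈ E₁
    · have hsub : f₀ ⊆ V₁ := edge_sub hT₁ f₀ hf₀E
      have hV : V₁ ∪ f₀ = V₁ := Finset.union_eq_left.mpr hsub
      have hE : insert f₀ E₁ = E₁ := Finset.insert_eq_self.mpr hf₀E
      rw [hV, hE]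
      rw [hE] at hf hp
      exact ih hf hvf hp
    · by_cases hff₀ : f = f₀
      · subst hff₀
        have hE : (insert f E₁).erase f = E₁ := Finset.erase_insert hf₀E
        rw [hE]
        by_cases hE₁ : E₁ = ∅
        · subst hE₁
          obtain ⟨w, hw⟩ := singleton_of_no_edges hT₁ rfl
          have hwu : w = u := by
            rw [hw, Finset.mem_singleton] at huV₁
            exact huV₁.symm
          have hVset : (V₁ ∪ f) \ (f \ {v}) = {v} := by
            ext a
            simp only [Finset.mem_sdiff, Finset.mem_union, Finset.mem_singleton, hw, hwu]
            constructor
            · rintro ⟨h1 | h1, h2⟩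
              · subst h1
                by_contra hne
                exact h2 ⟨huf₀, fun h => hne h⟩
              · by_contra hne
                exact h2 ⟨h1, fun h => hne h⟩
            · rintro rfl
              exact ⟨Or.inr hvf, fun h => h.2 rfl⟩
          rw [hVset]
          exact IsHypertree.single v
        · have huv : u = v := by
            obtain ⟨g, hg, hug⟩ := cover hT₁ (Finset.nonempty_iff_ne_empty.mpr hE₁) u huV₁
            have hgf : g ≠ f := fun h => hf₀E (h ▸ hg)
            have := hp g (Finset.mem_insert_of_mem hg) hgf
            have : u ∈ ({v} : Finset α) := this (Finset.mem_inter.mpr ⟨hug, huf₀⟩)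
            exact Finset.mem_singleton.mp this
          have hVset : (V₁ ∪ f) \ (f \ {v}) = V₁ := by
            ext a
            simp only [Finset.mem_sdiff, Finset.mem_union, Finset.mem_singleton]
            constructor
            · rintro ⟨h1 | h1, h2⟩
              · exact h1
              · by_contra h3
                exact h2 ⟨h1, fun hav => h3 (hav ▸ (huv ▸ huV₁))⟩
            · intro h1
              refine ⟨Or.inl h1, fun hcon => ?_⟩
              have : a ∈ f ∩ V₁ := Finset.mem_inter.mpr ⟨hcon.1, h1⟩
              rw [hu, Finset.mem_singleton] at this
              exact hcon.2 (this.trans huv)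
          rw [hVset]
          exact hT₁
      · -- f ∈ E₁
        have hfE₁ : f ∈ E₁ := by
          rcases Finset.mem_insert.mp hf with h | h
          · exact absurd h hff₀
          · exact h
        have hp₁ : ∀ g ∈ E₁, g ≠ f → g ∩ f ⊆ {v} :=
          fun g hg hgf => hp g (Finset.mem_insert_of_mem hg) hgf
        have IH := ih hfE₁ hvf hp₁
        have hf₀f : f₀ ∩ f ⊆ {v} := hp f₀ (Finset.mem_insert_self _ _) (fun h => hff₀ h.symm)
        have hcap' : f₀ ∩ (V₁ \ (f \ {v})) = {u} := by
          ext a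
          simp only [Finset.mem_inter, Finset.mem_sdiff, Finset.mem_singleton]
          constructor
          · rintro ⟨h1, h2, h3⟩
            have : a ∈ f₀ ∩ V₁ := Finset.mem_inter.mpr ⟨h1, h2⟩
            rw [hu, Finset.mem_singleton] at this
            exact this
          · intro ha
            rw [ha]
            refine ⟨huf₀, huV₁, fun hcon => ?_⟩
            have h9 : u ∈ ({v} : Finset α) := hf₀f (Finset.mem_inter.mpr ⟨huf₀, hcon.1⟩)
            exact hcon.2 (Finset.mem_singleton.mp h9)
        have hstep := IsHypertree.attach f₀ IH hk0 (by rw [hcap', Finset.card_singleton])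
        have hVset : (V₁ \ (f \ {v})) ∪ f₀ = (V₁ ∪ f₀) \ (f \ {v}) := by
          ext a
          simp only [Finset.mem_union, Finset.mem_sdiff, Finset.mem_singleton]
          constructor
          · rintro (⟨h1, h2⟩ | h1)
            · exact ⟨Or.inl h1, h2⟩
            · refine ⟨Or.inr h1, fun hcon => ?_⟩
              have : a ∈ ({v} : Finset α) := hf₀f (Finset.mem_inter.mpr ⟨h1, hcon.1⟩)
              exact hcon.2 (Finset.mem_singleton.mp this)
          · rintro ⟨h1 | h1, h2⟩
            · exact Or.inl ⟨h1, h2⟩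
            · exact Or.inr h1
        have hEset : (insert f₀ E₁).erase f = insert f₀ (E₁.erase f) :=
          Finset.erase_insert_of_ne (fun h => hff₀ h.symm)
        rw [hEset, ← hVset]
        exact hstep

lemma lift_aux {k : ℕ} {V₁ V₂ : Finset α} {E₁ E₂ : Finset (Finset α)} {e f : Finset α} {z u : α}
    (hT₂ : IsHypertree k V₂ E₂) (hEeq : E₁ = insert e E₂) (heE₂ : e ∉ E₂)
    (hVeq : V₁ = V₂ ∪ e) (hek : e.card = k) (hecap : e ∩ V₂ = {z})
    (hfk : f.card = k) (hfcap : f ∩ V₁ = {u}) (hfE₁ : f ∉ E₁) (huV₂ : u ∈ V₂) :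
    insert f E₁ = insert e (insert f E₂) ∧ e ∉ insert f E₂ ∧ V₁ ∪ f = (V₂ ∪ f) ∪ e ∧
      IsHypertree k (V₂ ∪ f) (insert f E₂) ∧ e.card = k ∧ e ∩ (V₂ ∪ f) = {z} := by
  have huf : u ∈ f := (Finset.mem_inter.mp (hfcap ▸ Finset.mem_singleton_self u)).1
  have heE₁ : e ∈ E₁ := hEeq ▸ Finset.mem_insert_self _ _
  have hef : e ≠ f := fun h => hfE₁ (h ▸ heE₁)
  have hV₂V₁ : V₂ ⊆ V₁ := hVeq ▸ Finset.subset_union_left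
  have hfV₂ : f ∩ V₂ = {u} := by
    apply Finset.Subset.antisymm
    · exact (Finset.inter_subset_inter subset_rfl hV₂V₁).trans (hfcap ▸ subset_rfl)
    · intro a ha
      rw [Finset.mem_singleton] at ha
      exact ha ▸ Finset.mem_inter.mpr ⟨huf, huV₂⟩
  have hzV₂ : z ∈ V₂ := (Finset.mem_inter.mp (hecap ▸ Finset.mem_singleton_self z)).2
  have hze : z ∈ e := (Finset.mem_inter.mp (hecap ▸ Finset.mem_singleton_self z)).1
  have hesub : e ⊆ V₁ := hVeq ▸ Finset.subset_union_right
  refine ⟨?_, ?_, ?_, ?_, hek, ?_⟩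
  · rw [hEeq, Finset.insert_comm]
  · intro hcon
    rcases Finset.mem_insert.mp hcon with h | h
    · exact hef h
    · exact heE₂ h
  · rw [hVeq, Finset.union_right_comm]
  · exact IsHypertree.attach f hT₂ hfk (by rw [hfV₂, Finset.card_singleton])
  · ext a
    simp only [Finset.mem_inter, Finset.mem_union, Finset.mem_singleton]
    constructor
    · rintro ⟨hae, h | h⟩
      · have : a ∈ e ∩ V₂ := Finset.mem_inter.mpr ⟨hae, h⟩
        rw [hecap, Finset.mem_singleton] at this
        exact this
      · have haV₁ : a ∈ V₁ := hesub hae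
        have : a ∈ f ∩ V₁ := Finset.mem_inter.mpr ⟨h, haV₁⟩
        rw [hfcap, Finset.mem_singleton] at this
        subst this
        have : a ∈ e ∩ V₂ := Finset.mem_inter.mpr ⟨hae, huV₂⟩
        rw [hecap, Finset.mem_singleton] at this
        exact this
    · rintro rfl
      exact ⟨hze, Or.inl hzV₂⟩

lemma reorder {k : ℕ} {V : Finset α} {E : Finset (Finset α)} (hT : IsHypertree k V E) :
    ∀ V'' E'', IsHypertree k V'' E'' → V'' ⊆ V → E'' ⊆ E → E'' ≠ E →
    ∃ V₁ E₁ e v, E = insert e E₁ ∧ e ∉ E₁ ∧ V = V₁ ∪ e ∧ IsHypertree k V₁ E₁ ∧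
      e.card = k ∧ e ∩ V₁ = {v} ∧ E'' ⊆ E₁ ∧ V'' ⊆ V₁ := by
  classical
  induction hT with
  | single w =>
    intro V'' E'' _ _ hEs hne
    exact absurd (Finset.subset_empty.mp hEs) hne
  | @attach V₁ E₁ f hT₁ hfk hfcap ih =>
    intro V'' E'' hT'' hVs hEs hne
    obtain ⟨u, hu⟩ := Finset.card_eq_one.mp hfcap
    have huf : u ∈ f := (Finset.mem_inter.mp (hu ▸ Finset.mem_singleton_self u)).1
    have huV₁ : u ∈ V₁ := (Finset.mem_inter.mp (hu ▸ Finset.mem_singleton_self u)).2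
    by_cases hfE₁ : f ∈ E₁
    · have hsub : f ⊆ V₁ := edge_sub hT₁ f hfE₁
      have hV : V₁ ∪ f = V₁ := Finset.union_eq_left.mpr hsub
      have hE : insert f E₁ = E₁ := Finset.insert_eq_self.mpr hfE₁
      rw [hV, hE]
      rw [hV] at hVs; rw [hE] at hEs hne
      exact ih V'' E'' hT'' hVs hEs hne
    · by_cases hfE'' : f ∈ E''
      · -- peel f from T''
        have hfsubV'' : f ⊆ V'' := edge_sub hT'' f hfE''
        have hpend : ∀ g ∈ E'', g ≠ f → g ∩ f ⊆ {u} := by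
          intro g hg hgf a ha
          obtain ⟨hag, haf⟩ := Finset.mem_inter.mp ha
          have hgE₁ : g ∈ E₁ := by
            rcases Finset.mem_insert.mp (hEs hg) with h | h
            · exact absurd h hgf
            · exact h
          have haV₁ : a ∈ V₁ := edge_sub hT₁ g hgE₁ hag
          have : a ∈ f ∩ V₁ := Finset.mem_inter.mpr ⟨haf, haV₁⟩
          rw [hu] at this
          exact this
        have hT''p := peel hT'' hfE'' huf hpend
        have hsub1 : E''.erase f ⊆ E₁ := by
          intro g hg
          obtain ⟨hgne, hgE''⟩ := Finset.mem_erase.mp hg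
          rcases Finset.mem_insert.mp (hEs hgE'') with h | h
          · exact absurd h hgne
          · exact h
        have hsub2 : V'' \ (f \ {u}) ⊆ V₁ := by
          intro a ha
          obtain ⟨haV'', hanot⟩ := Finset.mem_sdiff.mp ha
          rcases Finset.mem_union.mp (hVs haV'') with h | h
          · exact h
          · by_contra hcon
            exact hanot (Finset.mem_sdiff.mpr ⟨h, fun hau =>
              hcon ((Finset.mem_singleton.mp hau) ▸ huV₁)⟩)
        have hne1 : E''.erase f ≠ E₁ := by
          intro hcon
          have h1 : E''.card ≤ (insert f E₁).card :=
            Finset.card_le_card hEs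
          have h2 : E'' ≠ insert f E₁ := hne
          have h3 : E''.card < (insert f E₁).card :=
            Finset.card_lt_card (Finset.ssubset_iff_subset_ne.mpr ⟨hEs, h2⟩)
          have h4 := Finset.card_erase_of_mem hfE''
          have h5 := Finset.card_insert_of_notMem hfE₁
          have h6 : 1 ≤ E''.card := Finset.card_pos.mpr ⟨f, hfE''⟩
          have := congrArg Finset.card hcon
          omega
        obtain ⟨V₂, E₂, e, z, hEeq, heE₂, hVeq, hT₂, hek, hecap, hEsub₂, hVsub₂⟩ :=
          ih _ _ hT''p hsub2 hsub1 hne1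
        have huV₂ : u ∈ V₂ := hVsub₂ (Finset.mem_sdiff.mpr
          ⟨hfsubV'' huf, fun hcon => (Finset.mem_sdiff.mp hcon).2 (Finset.mem_singleton_self u)⟩)
        obtain ⟨l1, l2, l3, l4, l5, l6⟩ :=
          lift_aux hT₂ hEeq heE₂ hVeq hek hecap hfk hu hfE₁ huV₂
        refine ⟨V₂ ∪ f, insert f E₂, e, z, l1, l2, l3, l4, l5, l6, ?_, ?_⟩
        · intro g hg
          by_cases hgf : g = f
          · exact hgf ▸ Finset.mem_insert_self _ _
          · exact Finset.mem_insert_of_mem (hEsub₂ (Finset.mem_erase.mpr ⟨hgf, hg⟩))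
        · intro a ha
          by_cases haf : a ∈ f
          · exact Finset.mem_union_right _ haf
          · refine Finset.mem_union_left _ (hVsub₂ (Finset.mem_sdiff.mpr
              ⟨ha, fun hcon => haf (Finset.mem_sdiff.mp hcon).1⟩))
      · -- f ∉ E''
        have hEs₁ : E'' ⊆ E₁ := by
          intro g hg
          rcases Finset.mem_insert.mp (hEs hg) with h | h
          · exact absurd (h ▸ hg) hfE''
          · exact h
        by_cases hVs₁ : V'' ⊆ V₁
        · exact ⟨V₁, E₁, f, u, rfl, hfE₁, rfl, hT₁, hfk, hu, hEs₁, hVs₁⟩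
        · have hE''e : E'' = ∅ := by
            rw [← Finset.not_nonempty_iff_eq_empty]
            intro hEne
            apply hVs₁
            intro a ha
            obtain ⟨g, hg, hag⟩ := cover hT'' hEne a ha
            exact edge_sub hT₁ g (hEs₁ hg) hag
          obtain ⟨w, hw⟩ := singleton_of_no_edges hT'' hE''e
          have hwV : w ∈ V₁ ∪ f := hVs (hw ▸ Finset.mem_singleton_self w)
          have hwV₁ : w ∉ V₁ := by
            intro hcon
            exact hVs₁ (by
              intro a ha
              rw [hw, Finset.mem_singleton] at ha
              exact ha ▸ hcon)
          have hwf : w ∈ f := by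
            rcases Finset.mem_union.mp hwV with h | h
            · exact absurd h hwV₁
            · exact h
          by_cases hE₁ : E₁ = ∅
          · -- re-root f at w
            obtain ⟨z, hz⟩ := singleton_of_no_edges hT₁ hE₁
            have hzu : z = u := by
              rw [hz, Finset.mem_singleton] at huV₁
              exact huV₁.symm
            have hVf : V₁ ∪ f = {w} ∪ f := by
              ext a
              simp only [Finset.mem_union, Finset.mem_singleton, hz, hzu]
              constructor
              · rintro (rfl | h)
                · exact Or.inr huf
                · exact Or.inr h
              · rintro (rfl | h)
                · exact Or.inr hwf
                · exact Or.inr h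
            refine ⟨{w}, ∅, f, w, by rw [hE₁], Finset.notMem_empty f, hVf,
              IsHypertree.single w, hfk, ?_, by simp [hE''e], by rw [hw]⟩
            · ext a
              simp only [Finset.mem_inter, Finset.mem_singleton]
              constructor
              · rintro ⟨_, rfl⟩; rfl
              · rintro rfl; exact ⟨hwf, rfl⟩
          · -- use IH with the singleton tree {u}
            obtain ⟨V₂, E₂, e, z, hEeq, heE₂, hVeq, hT₂, hek, hecap, -, hVsub₂⟩ :=
              ih {u} ∅ (IsHypertree.single u) (Finset.singleton_subset_iff.mpr huV₁)
                (Finset.empty_subset _) (Ne.symm hE₁)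
            have huV₂ : u ∈ V₂ := hVsub₂ (Finset.mem_singleton_self u)
            obtain ⟨l1, l2, l3, l4, l5, l6⟩ :=
              lift_aux hT₂ hEeq heE₂ hVeq hek hecap hfk hu hfE₁ huV₂
            refine ⟨V₂ ∪ f, insert f E₂, e, z, l1, l2, l3, l4, l5, l6,
              by simp [hE''e], ?_⟩
            intro a ha
            rw [hw, Finset.mem_singleton] at ha
            exact ha ▸ Finset.mem_union_right _ hwf



open Finset

variable {α : Type*} [DecidableEq α]

open Classical in
noncomputable def matchings (E : Finset (Finset α)) : Finset (Finset (Finset α)) :=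
  E.powerset.filter (fun M => IsHyperMatching M)

lemma mem_matchings {E M : Finset (Finset α)} :
    M ∈ matchings E ↔ M ⊆ E ∧ IsHyperMatching M := by
  classical
  simp [matchings]

lemma matching_subset {M M' : Finset (Finset α)} (h : M' ⊆ M) (hM : IsHyperMatching M) :
    IsHyperMatching M' := fun e he f hf hne => hM e (h he) f (h hf) hne

open Classical in
lemma sumform (n k : ℕ) (E : Finset (Finset α)) (x : ℝ) :
    mPolyEval n k E x = ∑ M ∈ matchings E, (-1 : ℝ) ^ M.card * x ^ (n - M.card * k) := by
  classical
  rw [mPolyEval]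
  rw [← Finset.sum_fiberwise_of_maps_to
        (t := Finset.range (E.card+1)) (g := fun M : Finset (Finset α) => M.card)
        (fun M hM => by
          rw [Finset.mem_range, Nat.lt_succ_iff]
          exact Finset.card_le_card (mem_matchings.mp hM).1)
        (fun M => (-1 : ℝ) ^ M.card * x ^ (n - M.card * k))]
  apply Finset.sum_congr rfl
  intro t _
  rw [Finset.sum_congr rfl (fun M hM => by
        rw [(Finset.mem_filter.mp hM).2] :
      ∀ M ∈ (matchings E).filter (fun M => M.card = t),
        (-1:ℝ)^M.card * x^(n-M.card*k) = (-1:ℝ)^t * x^(n-t*k))]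
  rw [Finset.sum_const, nsmul_eq_mul]
  have h2 : ((matchings E).filter (fun M => M.card = t)).card = mCount E t := by
    rw [mCount, matchings, Finset.filter_filter]
    congr 1
    apply Finset.filter_congr
    intro M _
    exact ⟨fun h => ⟨h.2, h.1⟩, fun h => ⟨h.2, h.1⟩⟩
  rw [h2]; ring

lemma cov_gen {k : ℕ} {U : Finset α} {E : Finset (Finset α)} (hsub : ∀ f ∈ E, f ⊆ U)
    (hcard : ∀ f ∈ E, f.card = k) :
    ∀ M ∈ matchings E, M.card * k ≤ U.card := by
  intro M hM
  obtain ⟨hME, hmat⟩ := mem_matchings.mp hM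
  have h1 : (M.biUnion id).card = ∑ f ∈ M, f.card :=
    Finset.card_biUnion (fun f hf g hg h => hmat f hf g hg h)
  have h2 : ∑ f ∈ M, f.card = M.card * k := by
    rw [Finset.sum_congr rfl (fun f hf => hcard f (hME hf)), Finset.sum_const, smul_eq_mul]
  have h3 : M.biUnion id ⊆ U := by
    intro a ha
    obtain ⟨f, hf, haf⟩ := Finset.mem_biUnion.mp ha
    exact hsub f (hME hf) haf
  calc M.card * k = (M.biUnion id).card := by rw [h1, h2]
    _ ≤ U.card := Finset.card_le_card h3

lemma rec_eval {k : ℕ} {E₁ : Finset (Finset α)} {e : Finset α} {v : α} (n₁ : ℕ)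
    (hk : 1 ≤ k) (he : e ∉ E₁) (hv : v ∈ e)
    (hint : ∀ f ∈ E₁, f ∩ e ⊆ {v})
    (hcov1 : ∀ M ∈ matchings E₁, M.card * k ≤ n₁)
    (hcov2 : ∀ M ∈ matchings (E₁.filter (fun f => v ∉ f)), M.card * k ≤ n₁ - 1)
    (hn₁ : 1 ≤ n₁) (x : ℝ) :
    mPolyEval (n₁ + (k-1)) k (insert e E₁) x
      = x^(k-1) * mPolyEval n₁ k E₁ x
        - mPolyEval (n₁-1) k (E₁.filter (fun f => v ∉ f)) x := by
  classical
  set D := E₁.filter (fun f => v ∉ f) with hD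
  rw [sumform, sumform, sumform]
  rw [← Finset.sum_filter_add_sum_filter_not (matchings (insert e E₁)) (fun M => e ∈ M)]
  have hA : (matchings (insert e E₁)).filter (fun M => ¬ e ∈ M) = matchings E₁ := by
    ext M
    simp only [Finset.mem_filter, mem_matchings]
    constructor
    · rintro ⟨⟨hsub, hmat⟩, hnot⟩
      refine ⟨fun f hf => ?_, hmat⟩
      rcases Finset.mem_insert.mp (hsub hf) with h | h
      · exact absurd (h ▸ hf) hnot
      · exact h
    · rintro ⟨hsub, hmat⟩
      exact ⟨⟨hsub.trans (Finset.subset_insert _ _), hmat⟩, fun hcon => he (hsub hcon)⟩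
  rw [hA]
  have hA2 : ∑ M ∈ matchings E₁, (-1:ℝ)^M.card * x^(n₁ + (k-1) - M.card*k)
      = x^(k-1) * ∑ M ∈ matchings E₁, (-1:ℝ)^M.card * x^(n₁ - M.card*k) := by
    rw [Finset.mul_sum]
    apply Finset.sum_congr rfl
    intro M hM
    have h := hcov1 M hM
    have hexp : n₁ + (k-1) - M.card * k = (k-1) + (n₁ - M.card*k) := by omega
    rw [hexp, pow_add]; ring
  have hi : ∀ M ∈ (matchings (insert e E₁)).filter (fun M => e ∈ M), M.erase e ∈ matchings D := by
    intro M hM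
    obtain ⟨hMm, heM⟩ := Finset.mem_filter.mp hM
    obtain ⟨hsub, hmat⟩ := mem_matchings.mp hMm
    rw [mem_matchings]
    refine ⟨fun f hf => ?_, matching_subset (Finset.erase_subset _ _) hmat⟩
    obtain ⟨hfne, hfM⟩ := Finset.mem_erase.mp hf
    have hfE₁ : f ∈ E₁ := by
      rcases Finset.mem_insert.mp (hsub hfM) with h | h
      · exact absurd h hfne
      · exact h
    have hdisj : Disjoint f e := hmat f hfM e heM hfne
    rw [hD, Finset.mem_filter]
    exact ⟨hfE₁, fun hvf => (Finset.disjoint_left.mp hdisj hvf) hv⟩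
  have hj : ∀ N ∈ matchings D, insert e N ∈ (matchings (insert e E₁)).filter (fun M => e ∈ M) := by
    intro N hN
    obtain ⟨hND, hmatN⟩ := mem_matchings.mp hN
    have hNE₁ : N ⊆ E₁ := hND.trans (Finset.filter_subset _ _)
    have heN : e ∉ N := fun h => he (hNE₁ h)
    have hde : ∀ f ∈ N, Disjoint f e := by
      intro f hf
      have hfD := hND hf
      rw [hD, Finset.mem_filter] at hfD
      rw [Finset.disjoint_left]
      intro a haf hae
      have : a ∈ f ∩ e := Finset.mem_inter.mpr ⟨haf, hae⟩
      have := hint f hfD.1 this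
      rw [Finset.mem_singleton] at this
      exact hfD.2 (this ▸ haf)
    rw [Finset.mem_filter, mem_matchings]
    refine ⟨⟨Finset.insert_subset_insert _ hNE₁, ?_⟩, Finset.mem_insert_self _ _⟩
    intro f hf g hg hfg
    rcases Finset.mem_insert.mp hf with rfl | hfN
    · rcases Finset.mem_insert.mp hg with rfl | hgN
      · exact absurd rfl hfg
      · exact (hde g hgN).symm
    · rcases Finset.mem_insert.mp hg with rfl | hgN
      · exact hde f hfN
      · exact hmatN f hfN g hgN hfg
  have hB : ∑ M ∈ (matchings (insert e E₁)).filter (fun M => e ∈ M),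
        (-1:ℝ)^M.card * x^(n₁ + (k-1) - M.card*k)
      = ∑ N ∈ matchings D, -((-1:ℝ)^N.card * x^((n₁-1) - N.card*k)) := by
    apply Finset.sum_nbij' (fun M => M.erase e) (fun N => insert e N) hi hj
    · intro M hM
      exact Finset.insert_erase (Finset.mem_filter.mp hM).2
    · intro N hN
      refine Finset.erase_insert (fun h => he ?_)
      exact ((mem_matchings.mp hN).1.trans (Finset.filter_subset _ _)) h
    · intro M hM
      have heM : e ∈ M := (Finset.mem_filter.mp hM).2
      have hc : M.card = (M.erase e).card + 1 := by
        rw [Finset.card_erase_of_mem heM]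
        have : 1 ≤ M.card := Finset.card_pos.mpr ⟨e, heM⟩
        omega
      have hcov := hcov2 _ (hi M hM)
      have hmul : ((M.erase e).card + 1) * k = (M.erase e).card * k + k := by ring
      have hexp : n₁ + (k-1) - M.card * k = (n₁ - 1) - (M.erase e).card * k := by
        rw [hc]; omega
      rw [hexp, hc, pow_succ]; ring
  rw [hB, hA2, Finset.sum_neg_distrib]
  ring

lemma prod_eval {k n₁ n₂ : ℕ} {E₁ E₂ : Finset (Finset α)}
    (hdisj : ∀ f ∈ E₁, ∀ g ∈ E₂, Disjoint f g)
    (hne : ∀ f ∈ E₁, f.Nonempty)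
    (hcov1 : ∀ M ∈ matchings E₁, M.card * k ≤ n₁)
    (hcov2 : ∀ M ∈ matchings E₂, M.card * k ≤ n₂) (x : ℝ) :
    mPolyEval (n₁ + n₂) k (E₁ ∪ E₂) x = mPolyEval n₁ k E₁ x * mPolyEval n₂ k E₂ x := by
  classical
  have hEE : ∀ g, g ∈ E₁ → g ∈ E₂ → False := fun g h1 h2 => by
    have hd := hdisj g h1 g h2
    exact (hne g h1).ne_empty (by simpa using disjoint_self.mp hd)
  rw [sumform, sumform, sumform, Finset.sum_mul_sum, ← Finset.sum_product']
  have hi : ∀ M ∈ matchings (E₁ ∪ E₂), (M ∩ E₁, M ∩ E₂) ∈ (matchings E₁) ×ˢ (matchings E₂) := by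
    intro M hM
    obtain ⟨hsub, hmat⟩ := mem_matchings.mp hM
    rw [Finset.mem_product]
    exact ⟨mem_matchings.mpr ⟨Finset.inter_subset_right, matching_subset Finset.inter_subset_left hmat⟩,
      mem_matchings.mpr ⟨Finset.inter_subset_right, matching_subset Finset.inter_subset_left hmat⟩⟩
  have hj : ∀ p ∈ (matchings E₁) ×ˢ (matchings E₂), p.1 ∪ p.2 ∈ matchings (E₁ ∪ E₂) := by
    intro p hp
    rw [Finset.mem_product] at hp
    obtain ⟨h1, h2⟩ := hp
    obtain ⟨hs1, hm1⟩ := mem_matchings.mp h1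
    obtain ⟨hs2, hm2⟩ := mem_matchings.mp h2
    rw [mem_matchings]
    refine ⟨Finset.union_subset_union hs1 hs2, ?_⟩
    intro f hf g hg hfg
    rcases Finset.mem_union.mp hf with hf1 | hf2
    · rcases Finset.mem_union.mp hg with hg1 | hg2
      · exact hm1 f hf1 g hg1 hfg
      · exact hdisj f (hs1 hf1) g (hs2 hg2)
    · rcases Finset.mem_union.mp hg with hg1 | hg2
      · exact (hdisj g (hs1 hg1) f (hs2 hf2)).symm
      · exact hm2 f hf2 g hg2 hfg
  apply Finset.sum_nbij' (fun M => (M ∩ E₁, M ∩ E₂)) (fun p => p.1 ∪ p.2) hi hj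
  · intro M hM
    obtain ⟨hsub, _⟩ := mem_matchings.mp hM
    simp only
    rw [← Finset.inter_union_distrib_left]
    exact Finset.inter_eq_left.mpr hsub
  · intro p hp
    rw [Finset.mem_product] at hp
    obtain ⟨hs1, _⟩ := mem_matchings.mp hp.1
    obtain ⟨hs2, _⟩ := mem_matchings.mp hp.2
    have e1 : (p.1 ∪ p.2) ∩ E₁ = p.1 := by
      ext a
      simp only [Finset.mem_inter, Finset.mem_union]
      constructor
      · rintro ⟨h | h, haE⟩
        · exact h
        · exact absurd haE (fun haE => hEE a haE (hs2 h))
      · intro h; exact ⟨Or.inl h, hs1 h⟩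
    have e2 : (p.1 ∪ p.2) ∩ E₂ = p.2 := by
      ext a
      simp only [Finset.mem_inter, Finset.mem_union]
      constructor
      · rintro ⟨h | h, haE⟩
        · exact absurd (hs1 h) (fun haE1 => hEE a haE1 haE)
        · exact h
      · intro h; exact ⟨Or.inr h, hs2 h⟩
    rw [e1, e2]
  · intro M hM
    have hp := hi M hM
    rw [Finset.mem_product] at hp
    have hc1 := hcov1 _ hp.1
    have hc2 := hcov2 _ hp.2
    have hdint : Disjoint (M ∩ E₁) (M ∩ E₂) := by
      rw [Finset.disjoint_left]
      intro a ha1 ha2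
      exact hEE a (Finset.mem_inter.mp ha1).2 (Finset.mem_inter.mp ha2).2
    have hMeq : M = (M ∩ E₁) ∪ (M ∩ E₂) := by
      rw [← Finset.inter_union_distrib_left]
      exact (Finset.inter_eq_left.mpr (mem_matchings.mp hM).1).symm
    have hcard : M.card = (M ∩ E₁).card + (M ∩ E₂).card := by
      conv_lhs => rw [hMeq]
      exact Finset.card_union_of_disjoint hdint
    have hc1' : (M ∩ E₁).card * k ≤ n₁ := hc1
    have hc2' : (M ∩ E₂).card * k ≤ n₂ := hc2
    have hadd : ((M ∩ E₁).card + (M ∩ E₂).card) * k = (M ∩ E₁).card * k + (M ∩ E₂).card * k := by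
      ring
    have hexp : n₁ + n₂ - M.card * k = (n₁ - (M ∩ E₁).card * k) + (n₂ - (M ∩ E₂).card * k) := by
      rw [hcard]; omega
    rw [hexp, hcard, pow_add, pow_add]; ring



open Finset

variable {α : Type*} [DecidableEq α]

lemma mCount_zero (E : Finset (Finset α)) : mCount E 0 = 1 := by
  classical
  rw [mCount]
  have : (E.powerset.filter (fun M => M.card = 0 ∧ IsHyperMatching M)) = {∅} := by
    ext M
    simp only [Finset.mem_filter, Finset.mem_powerset, Finset.mem_singleton, Finset.card_eq_zero]
    constructor
    · rintro ⟨-, rfl, -⟩; rfl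
    · rintro rfl
      exact ⟨Finset.empty_subset _, rfl, fun e he => by simp at he⟩
  rw [this, Finset.card_singleton]

lemma mPolyEval_empty (n k : ℕ) (x : ℝ) : mPolyEval n k (∅ : Finset (Finset α)) x = x^n := by
  rw [mPolyEval]
  simp [mCount_zero]

noncomputable def coefSum (E : Finset (Finset α)) : ℝ :=
  ∑ t ∈ Finset.range (E.card + 1), (mCount E t : ℝ)

lemma coefSum_nonneg (E : Finset (Finset α)) : 0 ≤ coefSum E :=
  Finset.sum_nonneg (fun t _ => Nat.cast_nonneg _)

lemma mPolyEval_cont (n k : ℕ) (E : Finset (Finset α)) :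
    Continuous (fun x : ℝ => mPolyEval n k E x) := by
  unfold mPolyEval
  exact continuous_finset_sum _ (fun t _ => by fun_prop)

lemma pos_of_big {n k : ℕ} {E : Finset (Finset α)} (hk : 1 ≤ k) (hn : 1 ≤ n) {x : ℝ}
    (hx1 : 1 < x) (hxC : coefSum E < x) : 0 < mPolyEval n k E x := by
  have hx0 : (0:ℝ) < x := lt_trans zero_lt_one hx1
  have key : ∀ i ∈ Finset.range E.card,
      -((mCount E (i+1) : ℝ) * x^(n-1)) ≤ (-1:ℝ)^(i+1) * (mCount E (i+1) : ℝ) * x^(n-(i+1)*k) := by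
    intro i _
    have hik : 1 * 1 ≤ (i+1) * k := Nat.mul_le_mul (by omega) hk
    have h1 : x ^ (n - (i+1)*k) ≤ x ^ (n-1) :=
      pow_le_pow_right₀ (le_of_lt hx1) (by omega)
    have hm : (0:ℝ) ≤ (mCount E (i+1) : ℝ) := Nat.cast_nonneg _
    have hxe : (0:ℝ) ≤ x ^ (n-(i+1)*k) := le_of_lt (pow_pos hx0 _)
    rcases neg_one_pow_eq_or ℝ (i+1) with h | h <;> rw [h] <;> nlinarith
  have hsplit : mPolyEval n k E x
      = (∑ i ∈ Finset.range E.card,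
          (-1:ℝ)^(i+1) * (mCount E (i+1) : ℝ) * x^(n-(i+1)*k)) + x^n := by
    rw [mPolyEval, Finset.sum_range_succ']
    congr 1
    simp [mCount_zero]
  have hS : ∑ i ∈ Finset.range E.card, (mCount E (i+1) : ℝ) ≤ coefSum E := by
    rw [coefSum, Finset.sum_range_succ']
    have : (0:ℝ) ≤ (mCount E 0 : ℝ) := Nat.cast_nonneg _
    linarith
  have h2 : -(coefSum E * x^(n-1))
      ≤ ∑ i ∈ Finset.range E.card, (-1:ℝ)^(i+1) * (mCount E (i+1) : ℝ) * x^(n-(i+1)*k) := by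
    calc -(coefSum E * x^(n-1))
        ≤ -((∑ i ∈ Finset.range E.card, (mCount E (i+1) : ℝ)) * x^(n-1)) := by
          have : (0:ℝ) ≤ x^(n-1) := le_of_lt (pow_pos hx0 _)
          nlinarith
      _ = ∑ i ∈ Finset.range E.card, -((mCount E (i+1) : ℝ) * x^(n-1)) := by
          rw [Finset.sum_neg_distrib, Finset.sum_mul]
      _ ≤ _ := Finset.sum_le_sum key
  have hxn : x^n = x^(n-1) * x := by
    rw [← pow_succ]
    congr 1
    omega
  have : (0:ℝ) < x^(n-1) * (x - coefSum E) := by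
    apply mul_pos (pow_pos hx0 _)
    linarith
  rw [hsplit]
  nlinarith [pow_pos hx0 (n-1)]

def IsMR (n k : ℕ) (E : Finset (Finset α)) (ρ : ℝ) : Prop :=
  mPolyEval n k E ρ = 0 ∧ ∀ x, mPolyEval n k E x = 0 → x ≤ ρ

lemma isMR_unique {n k : ℕ} {E : Finset (Finset α)} {ρ₁ ρ₂ : ℝ}
    (h1 : IsMR n k E ρ₁) (h2 : IsMR n k E ρ₂) : ρ₁ = ρ₂ :=
  le_antisymm (h2.2 ρ₁ h1.1) (h1.2 ρ₂ h2.1)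

lemma isMR_empty (k : ℕ) : IsMR 1 k (∅ : Finset (Finset α)) 0 := by
  constructor
  · rw [mPolyEval_empty]; simp
  · intro x hx
    rw [mPolyEval_empty] at hx
    simpa using le_of_eq hx

lemma root_ge_of_nonpos {n k : ℕ} {E : Finset (Finset α)} (hk : 1 ≤ k) (hn : 1 ≤ n) {c : ℝ}
    (hc : mPolyEval n k E c ≤ 0) : ∃ z, c ≤ z ∧ mPolyEval n k E z = 0 := by
  set b := max (max 1 (coefSum E)) c + 1 with hb
  have hcb : c ≤ b := by
    have := le_max_right (max 1 (coefSum E)) c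
    linarith
  have hb1 : 1 < b := by
    have h := le_max_left 1 (coefSum E)
    have := le_max_left (max 1 (coefSum E)) c
    linarith
  have hbC : coefSum E < b := by
    have h := le_max_right 1 (coefSum E)
    have := le_max_left (max 1 (coefSum E)) c
    linarith
  have hpos : 0 < mPolyEval n k E b := pos_of_big hk hn hb1 hbC
  have := intermediate_value_Icc hcb (mPolyEval_cont n k E).continuousOn
  have h0 : (0:ℝ) ∈ Set.Icc (mPolyEval n k E c) (mPolyEval n k E b) := ⟨hc, le_of_lt hpos⟩
  obtain ⟨z, hz, hz0⟩ := this h0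
  exact ⟨z, hz.1, hz0⟩

lemma exists_maxroot {n k : ℕ} {E : Finset (Finset α)} (hk : 1 ≤ k) (hn : 1 ≤ n) {c : ℝ}
    (hc : mPolyEval n k E c ≤ 0) : ∃ ρ, IsMR n k E ρ := by
  set S := {y : ℝ | mPolyEval n k E y = 0} with hS
  have hub : ∀ y ∈ S, y ≤ max 1 (coefSum E) := by
    intro y hy
    by_contra hcon
    push_neg at hcon
    have h1 : 1 < y := lt_of_le_of_lt (le_max_left _ _) hcon
    have h2 : coefSum E < y := lt_of_le_of_lt (le_max_right _ _) hcon
    exact absurd hy (by simp only [hS, Set.mem_setOf_eq]; exact ne_of_gt (pos_of_big hk hn h1 h2))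
  have hbdd : BddAbove S := ⟨max 1 (coefSum E), fun y hy => hub y hy⟩
  have hne : S.Nonempty := by
    obtain ⟨z, _, hz⟩ := root_ge_of_nonpos hk hn hc
    exact ⟨z, hz⟩
  have hclosed : IsClosed S :=
    isClosed_singleton.preimage (mPolyEval_cont n k E)
  refine ⟨sSup S, hclosed.csSup_mem hne hbdd, fun x hx => le_csSup hbdd hx⟩

lemma pos_above {n k : ℕ} {E : Finset (Finset α)} (hk : 1 ≤ k) (hn : 1 ≤ n) {ρ : ℝ}
    (hmr : IsMR n k E ρ) {y : ℝ} (hy : ρ < y) : 0 < mPolyEval n k E y := by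
  by_contra hcon
  push_neg at hcon
  obtain ⟨z, hz1, hz2⟩ := root_ge_of_nonpos hk hn hcon
  exact absurd (hmr.2 z hz2) (by linarith)

lemma posforest {k : ℕ} {V₀ V : Finset α} {E₀ E : Finset (Finset α)}
    (hF : IsForestOf k V₀ E₀ V E) (hk : 1 ≤ k) {x : ℝ}
    (hcomp : ∀ W F, IsHypertree k W F → W ⊆ V₀ → F ⊆ E₀ → 0 < mPolyEval W.card k F x) :
    0 < mPolyEval V.card k E x := by
  induction hF with
  | nil =>
    rw [Finset.card_empty, mPolyEval_empty]
    norm_num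
  | @cons V E W F hFrec hTW hdisj hWV₀ hFE₀ ih =>
    have hcard : (V ∪ W).card = V.card + W.card := Finset.card_union_of_disjoint hdisj
    have hcross : ∀ f ∈ E, ∀ g ∈ F, Disjoint f g := fun f hf g hg =>
      Finset.disjoint_of_subset_left (forest_edge_sub hFrec f hf)
        (Finset.disjoint_of_subset_right (edge_sub hTW g hg) hdisj)
    have hne : ∀ f ∈ E, f.Nonempty := by
      intro f hf
      rw [← Finset.card_pos, forest_edge_card hFrec f hf]
      omega
    rw [hcard, prod_eval hcross hne
      (cov_gen (forest_edge_sub hFrec) (forest_edge_card hFrec))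
      (cov_gen (edge_sub hTW) (edge_card hTW))]
    exact mul_pos ih (hcomp W F hTW hWV₀ hFE₀)

lemma main (k : ℕ) : ∀ (m : ℕ) (V : Finset α) (E : Finset (Finset α)),
    IsHypertree k V E → E.card ≤ m →
    ∃ ρ, IsMR V.card k E ρ ∧ 0 ≤ ρ ∧
      ∀ (V' : Finset α) (E' : Finset (Finset α)), IsHypertree k V' E' → V' ⊆ V → E' ⊆ E →
        E'.card < E.card → ∀ ρ', IsMR V'.card k E' ρ' → ρ' < ρ := by
  intro m
  induction m with
  | zero =>
    intro V E hT hc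
    have hE : E = ∅ := Finset.card_eq_zero.mp (le_antisymm hc (Nat.zero_le _))
    subst hE
    obtain ⟨w, hw⟩ := singleton_of_no_edges hT rfl
    subst hw
    rw [Finset.card_singleton]
    refine ⟨0, isMR_empty k, le_refl 0, ?_⟩
    intro V' E' _ _ _ hlt
    exact absurd hlt (Nat.not_lt_zero _)
  | succ m IH =>
    intro V E hT hc
    by_cases hcm : E.card ≤ m
    · exact IH V E hT hcm
    · have hcard : E.card = m + 1 := by omega
      have hEne : E.Nonempty := by rw [← Finset.card_pos]; omega
      have hn : 1 ≤ V.card := Finset.card_pos.mpr (v_nonempty hT)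
      -- main step: any pendant decomposition gives a point where φ_T is negative
      have step : ∀ (V₁ : Finset α) (E₁ : Finset (Finset α)) (e : Finset α) (v : α),
          E = insert e E₁ → e ∉ E₁ → V = V₁ ∪ e →
          IsHypertree k V₁ E₁ → e.card = k → e ∩ V₁ = {v} →
          ∃ ρ₁, IsMR V₁.card k E₁ ρ₁ ∧ 0 ≤ ρ₁ ∧ mPolyEval V.card k E ρ₁ < 0 ∧
            (∀ (V' : Finset α) (E' : Finset (Finset α)), IsHypertree k V' E' → V' ⊆ V₁ →
              E' ⊆ E₁ → E'.card < E₁.card → ∀ ρ', IsMR V'.card k E' ρ' → ρ' < ρ₁) := by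
        intro V₁ E₁ e v hEeq heE₁ hVeq hT₁ hek hecap
        have hvV₁ : v ∈ V₁ := (Finset.mem_inter.mp (hecap ▸ Finset.mem_singleton_self v)).2
        have hve : v ∈ e := (Finset.mem_inter.mp (hecap ▸ Finset.mem_singleton_self v)).1
        have hk1 : 1 ≤ k := by
          have h := Finset.card_le_card (Finset.inter_subset_left : e ∩ V₁ ⊆ e)
          rw [hecap, Finset.card_singleton, hek] at h
          exact h
        have hE₁card : E₁.card = m := by
          rw [hEeq, Finset.card_insert_of_notMem heE₁] at hcard
          omega
        obtain ⟨ρ₁, hmr₁, hρ₁0, hsub₁⟩ := IH V₁ E₁ hT₁ (le_of_eq hE₁card)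
        have hn₁ : 1 ≤ V₁.card := Finset.card_pos.mpr (v_nonempty hT₁)
        have hforest := decomp hT₁ hvV₁
        have hDpos : 0 < mPolyEval (V₁.erase v).card k (E₁.filter (fun g => v ∉ g)) ρ₁ := by
          apply posforest hforest hk1
          intro W F hTW hWsub hFsub
          by_cases hE₁e : E₁ = ∅
          · exfalso
            obtain ⟨z, hz⟩ := singleton_of_no_edges hT₁ hE₁e
            have hzv : z = v := by
              rw [hz, Finset.mem_singleton] at hvV₁
              exact hvV₁.symm
            obtain ⟨a, haW⟩ := v_nonempty hTW
            have := hWsub haW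
            rw [hz, hzv, Finset.erase_singleton] at this
            simp at this
          · have hFE₁ : F ⊆ E₁ := hFsub.trans (Finset.filter_subset _ _)
            have hDcard : (E₁.filter (fun g => v ∉ g)).card < E₁.card := by
              obtain ⟨g, hg, hvg⟩ :=
                cover hT₁ (Finset.nonempty_iff_ne_empty.mpr hE₁e) v hvV₁
              apply Finset.card_lt_card
              rw [Finset.ssubset_iff_subset_ne]
              refine ⟨Finset.filter_subset _ _, fun hcon => ?_⟩
              have hgf : g ∈ E₁.filter (fun g => v ∉ g) := by rw [hcon]; exact hg
              exact (Finset.mem_filter.mp hgf).2 hvg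
            have hFcard : F.card < E₁.card :=
              lt_of_le_of_lt (Finset.card_le_card hFsub) hDcard
            obtain ⟨ρF, hmrF, -, -⟩ := IH W F hTW (by omega)
            have hlt := hsub₁ W F hTW (hWsub.trans (Finset.erase_subset _ _)) hFE₁ hFcard ρF hmrF
            exact pos_above hk1 (Finset.card_pos.mpr (v_nonempty hTW)) hmrF hlt
        have hVcard : V.card = V₁.card + (k - 1) := by
          rw [hVeq]
          have hcu := Finset.card_union_add_card_inter V₁ e
          rw [Finset.inter_comm, hecap, Finset.card_singleton, hek] at hcu
          omega
        have hint : ∀ f ∈ E₁, f ∩ e ⊆ {v} := by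
          intro f hf a ha
          obtain ⟨haf, hae⟩ := Finset.mem_inter.mp ha
          have : a ∈ e ∩ V₁ := Finset.mem_inter.mpr ⟨hae, edge_sub hT₁ f hf haf⟩
          rw [hecap] at this
          exact this
        have hcov2 : ∀ M ∈ matchings (E₁.filter (fun g => v ∉ g)), M.card * k ≤ V₁.card - 1 := by
          have h := cov_gen (U := V₁.erase v) (E := E₁.filter (fun g => v ∉ g))
            (fun f hf => Finset.subset_erase.mpr
              ⟨edge_sub hT₁ f (Finset.mem_filter.mp hf).1, (Finset.mem_filter.mp hf).2⟩)
            (fun f hf => edge_card hT₁ f (Finset.mem_filter.mp hf).1)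
          rwa [Finset.card_erase_of_mem hvV₁] at h
        have hrec := rec_eval V₁.card hk1 heE₁ hve hint
          (cov_gen (edge_sub hT₁) (edge_card hT₁)) hcov2 hn₁ ρ₁
        have hDpos' : 0 < mPolyEval (V₁.card - 1) k (E₁.filter (fun g => v ∉ g)) ρ₁ := by
          rwa [Finset.card_erase_of_mem hvV₁] at hDpos
        have hneg : mPolyEval V.card k E ρ₁ < 0 := by
          rw [hEeq, hVcard, hrec, hmr₁.1, mul_zero, zero_sub]
          linarith
        exact ⟨ρ₁, hmr₁, hρ₁0, hneg, hsub₁⟩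
      -- existence of max root of T
      obtain ⟨w0, hw0⟩ := v_nonempty hT
      obtain ⟨Va, Ea, ea, va, hEeqa, heEa, hVeqa, hTa, heka, hecapa, -, -⟩ :=
        reorder hT {w0} ∅ (IsHypertree.single w0) (Finset.singleton_subset_iff.mpr hw0)
          (Finset.empty_subset _) (fun h => hEne.ne_empty h.symm)
      have hk1 : 1 ≤ k := by
        have h := Finset.card_le_card (Finset.inter_subset_left : ea ∩ Va ⊆ ea)
        rw [hecapa, Finset.card_singleton, heka] at h
        exact h
      have hlt_of_neg : ∀ a : ℝ, mPolyEval V.card k E a < 0 →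
          ∀ r : ℝ, IsMR V.card k E r → a < r := by
        intro a ha r hr
        by_contra hcon
        push_neg at hcon
        rcases eq_or_lt_of_le hcon with heq | hlt2
        · have h0 := hr.1
          rw [heq] at h0
          linarith
        · linarith [pos_above hk1 hn hr hlt2]
      obtain ⟨ρ₁a, hmr₁a, hρ₁0a, hnega, -⟩ := step Va Ea ea va hEeqa heEa hVeqa hTa heka hecapa
      obtain ⟨ρ, hmr⟩ := exists_maxroot hk1 hn (le_of_lt hnega)
      have hρpos : ρ₁a < ρ := hlt_of_neg ρ₁a hnega ρ hmr
      refine ⟨ρ, hmr, by linarith, ?_⟩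
      intro V' E' hT' hV's hE's hlt ρ' hmr'
      obtain ⟨V₁', E₁', e', v', hEeq', heE₁', hVeq', hT₁', hek', hecap', hE'sub, hV'sub⟩ :=
        reorder hT V' E' hT' hV's hE's (fun h => by rw [h] at hlt; exact lt_irrefl _ hlt)
      obtain ⟨ρ₁', hmr₁', -, hneg', hsub'⟩ :=
        step V₁' E₁' e' v' hEeq' heE₁' hVeq' hT₁' hek' hecap'
      have hρ₁ρ : ρ₁' < ρ := hlt_of_neg ρ₁' hneg' ρ hmr
      by_cases hEE : E'.card < E₁'.card
      · exact lt_trans (hsub' V' E' hT' hV'sub hE'sub hEE ρ' hmr') hρ₁ρ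
      · have hEeq2 : E' = E₁' := Finset.eq_of_subset_of_card_le hE'sub (by omega)
        have hVc : V'.card = V₁'.card := by
          rw [card_V hT', card_V hT₁', hEeq2]
        rw [hVc, hEeq2] at hmr'
        exact (isMR_unique hmr' hmr₁') ▸ hρ₁ρ

end HTaux

/-- If `T'` is a proper sub-hypertree of a `k`-uniform hypertree `T`, then the largest
real root of `φ_{T'}` is strictly less than the largest real root of `φ_T`. -/
theorem stmt14 {α : Type*} [DecidableEq α] (k : ℕ)
    (V : Finset α) (E : Finset (Finset α)) (hT : IsHypertree k V E)
    (V' : Finset α) (E' : Finset (Finset α)) (hT' : IsHypertree k V' E')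
    (hVsub : V' ⊆ V) (hEsub : E' ⊆ E) (hproper : E'.card < E.card)
    (ρ ρ' : ℝ)
    (hroot : mPolyEval V.card k E ρ = 0)
    (hmax : ∀ x : ℝ, mPolyEval V.card k E x = 0 → x ≤ ρ)
    (hroot' : mPolyEval V'.card k E' ρ' = 0)
    (hmax' : ∀ x : ℝ, mPolyEval V'.card k E' x = 0 → x ≤ ρ') :
    ρ' < ρ := by
  classical
  obtain ⟨r, hmr, -, hclaim⟩ := HTaux.main k E.card V E hT le_rfl
  have hρr : ρ = r := le_antisymm (hmr.2 ρ hroot) (hmax r hmr.1)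
  subst hρr
  exact hclaim V' E' hT' hVsub hEsub hproper ρ' ⟨hroot', hmax'⟩
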